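/- Let K ≥ 1 and L > 0. Suppose (Z_k)_{k∈[K]} and (Z_k^n)_{n∈[K],k∈[K]} are jointly distributed finitely-valued random variables such that (i) H(Z_k^1, …, Z_k^K | Z_k) = 0 for every k ∈ [K], (ii) H(Z_k^n) = L for all n, k ∈ [K], and (iii) for every n ∈ [K] the family (Z_1^n, …, Z_K^n) is (K,n)-MDS with symbol size L. Then (1/K)·Σ_{k∈[K]} H(Z_k) ≥ (1 + 1/2 + ⋯ + 1/K)·L. In particular, if every Z_k takes values in a set of size at most 2^{L_Z} (so H(Z_k) ≤ L_Z), then the rate R_Z = L_Z/L satisfies R_Z ≥ 1 + 1/2 + ⋯ + 1/K (converse part of Theorem 1). -/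

import Mathlib

open scoped BigOperators

open Classical in
/-- The probability that the finitely-valued random variable `X` takes the value `s`,
under the probability weights `μ` on the finite sample space `Ω`. -/
noncomputable def probOf {Ω S : Type*} [Fintype Ω] (μ : Ω → ℝ) (X : Ω → S) (s : S) : ℝ :=
  ∑ ω ∈ Finset.univ.filter (fun ω => X ω = s), μ ω

/-- Shannon entropy (in bits) of a finitely-valued random variable. -/
noncomputable def Hent {Ω S : Type*} [Fintype Ω] [Fintype S] (μ : Ω → ℝ) (X : Ω → S) : ℝ :=
  - ∑ s : S, probOf μ X s * Real.logb 2 (probOf μ X s)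

/-- Conditional entropy H(X | Y) (in bits). -/
noncomputable def Hcond {Ω S T : Type*} [Fintype Ω] [Fintype S] [Fintype T]
    (μ : Ω → ℝ) (X : Ω → S) (Y : Ω → T) : ℝ :=
  Hent μ (fun ω => (X ω, Y ω)) - Hent μ Y

section Basics
variable {Ω : Type} [Fintype Ω] (μ : Ω → ℝ)

open Classical in
lemma probOf_ite {S : Type*} (X : Ω → S) (s : S) :
    probOf μ X s = ∑ ω, if X ω = s then μ ω else 0 := by
  unfold probOf
  rw [Finset.sum_filter]

lemma probOf_nonneg (hμ0 : ∀ ω, 0 ≤ μ ω) {S : Type*} (X : Ω → S) (s : S) :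
    0 ≤ probOf μ X s := by
  classical
  rw [probOf_ite]
  refine Finset.sum_nonneg fun ω _ => ?_
  split <;> simp [hμ0]

lemma sum_probOf {S : Type*} [Fintype S] (hμ1 : (∑ ω, μ ω) = 1) (X : Ω → S) :
    ∑ s : S, probOf μ X s = 1 := by
  classical
  simp_rw [probOf_ite]
  rw [Finset.sum_comm, ← hμ1]
  refine Finset.sum_congr rfl fun ω _ => ?_
  simp [Finset.sum_ite_eq]

open Classical in
lemma probOf_comp {S S' : Type*} [Fintype S] (X : Ω → S) (f : S → S') (t : S') :
    probOf μ (fun ω => f (X ω)) t = ∑ s, if f s = t then probOf μ X s else 0 := by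
  classical
  simp_rw [probOf_ite]
  have hsw : ∀ s : S, (if f s = t then ∑ ω, (if X ω = s then μ ω else 0) else 0)
      = ∑ ω, if f s = t then (if X ω = s then μ ω else 0) else 0 := fun s => by
    split <;> simp
  simp_rw [hsw]
  rw [Finset.sum_comm]
  refine Finset.sum_congr rfl fun ω _ => ?_
  by_cases h : f (X ω) = t
  · simp only [h, if_true]
    rw [Finset.sum_congr rfl (g := fun s => if X ω = s then μ ω else 0) (fun s _ => by
      by_cases hs : X ω = s
      · subst hs; simp [h]
      · simp [hs])]
    simpa using Finset.sum_ite_eq Finset.univ (X ω) (fun _ => μ ω)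
  · simp only [h, if_false]
    rw [Finset.sum_congr rfl (g := fun s => (0:ℝ)) (fun s _ => by
      by_cases hs : X ω = s
      · subst hs; simp [h]
      · simp [hs])]
    simp

lemma sum_comp_weight {S S' : Type*} [Fintype S] [Fintype S'] (X : Ω → S) (f : S → S') (F : S' → ℝ) :
    ∑ t : S', probOf μ (fun ω => f (X ω)) t * F t = ∑ s : S, probOf μ X s * F (f s) := by
  classical
  simp_rw [probOf_comp, Finset.sum_mul, ite_mul, zero_mul]
  rw [Finset.sum_comm]
  refine Finset.sum_congr rfl fun s _ => ?_
  simpa using Finset.sum_ite_eq Finset.univ (f s) (fun t => probOf μ X s * F t)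

lemma probOf_le_comp (hμ0 : ∀ ω, 0 ≤ μ ω) {S S' : Type*} (X : Ω → S) (f : S → S') (s : S) :
    probOf μ X s ≤ probOf μ (fun ω => f (X ω)) (f s) := by
  classical
  simp_rw [probOf_ite]
  refine Finset.sum_le_sum fun ω _ => ?_
  by_cases h : X ω = s
  · simp [h, hμ0 ω]
  · simp only [h, if_false]
    split <;> simp [hμ0 ω]

end Basics


section Ent
variable {Ω : Type} [Fintype Ω] {μ : Ω → ℝ} (hμ0 : ∀ ω, 0 ≤ μ ω) (hμ1 : (∑ ω, μ ω) = 1)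

open Classical in
lemma sum_group {S S' : Type*} [Fintype S] [Fintype S'] (f : S → S') (G : S → ℝ) :
    ∑ s : S, G s = ∑ t : S', ∑ s : S, if f s = t then G s else 0 := by
  classical
  rw [Finset.sum_comm]
  refine Finset.sum_congr rfl fun s _ => ?_
  simpa using (Finset.sum_ite_eq Finset.univ (f s) (fun _ => G s)).symm

include hμ0 in
lemma Hent_comp_le {S S' : Type*} [Fintype S] [Fintype S'] (X : Ω → S) (f : S → S') :
    Hent μ (fun ω => f (X ω)) ≤ Hent μ X := by
  classical
  unfold Hent
  rw [neg_le_neg_iff]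
  have hq : ∀ t, probOf μ (fun ω => f (X ω)) t = ∑ s, if f s = t then probOf μ X s else 0 :=
    fun t => probOf_comp μ X f t
  calc ∑ s, probOf μ X s * Real.logb 2 (probOf μ X s)
      = ∑ t : S', ∑ s, if f s = t then probOf μ X s * Real.logb 2 (probOf μ X s) else 0 :=
        sum_group f _
    _ ≤ ∑ t : S', ∑ s, if f s = t then probOf μ X s * Real.logb 2 (probOf μ (fun ω => f (X ω)) t) else 0 := by
        refine Finset.sum_le_sum fun t _ => Finset.sum_le_sum fun s _ => ?_
        by_cases hst : f s = t
        · simp only [hst, if_true]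
          rcases eq_or_lt_of_le (probOf_nonneg μ hμ0 X s) with h0 | h0
          · rw [← h0]; simp
          · have hle : probOf μ X s ≤ probOf μ (fun ω => f (X ω)) t := by
              rw [← hst]; exact probOf_le_comp μ hμ0 X f s
            exact mul_le_mul_of_nonneg_left
              (Real.logb_le_logb_of_le one_lt_two h0 hle) (le_of_lt h0)
        · simp [hst]
    _ = ∑ t : S', probOf μ (fun ω => f (X ω)) t * Real.logb 2 (probOf μ (fun ω => f (X ω)) t) := by
        refine Finset.sum_congr rfl fun t _ => ?_
        rw [hq t, Finset.sum_mul]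
        refine Finset.sum_congr rfl fun s _ => ?_
        split <;> simp

include hμ0 in
lemma Hent_congr_det {S S' : Type*} [Fintype S] [Fintype S'] {X : Ω → S} {Y : Ω → S'}
    (f : S → S') (g : S' → S) (hf : ∀ ω, f (X ω) = Y ω) (hg : ∀ ω, g (Y ω) = X ω) :
    Hent μ X = Hent μ Y := by
  have h1 : Hent μ (fun ω => f (X ω)) ≤ Hent μ X := Hent_comp_le hμ0 X f
  have h2 : Hent μ (fun ω => g (Y ω)) ≤ Hent μ Y := Hent_comp_le hμ0 Y g
  have e1 : (fun ω => f (X ω)) = Y := funext hf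
  have e2 : (fun ω => g (Y ω)) = X := funext hg
  rw [e1] at h1; rw [e2] at h2
  linarith

lemma Hent_congr {S : Type*} [Fintype S] {X Y : Ω → S} (h : ∀ ω, X ω = Y ω) :
    Hent μ X = Hent μ Y := by rw [funext h]

include hμ1 in
lemma Hent_subsingleton {S : Type*} [Fintype S] [Subsingleton S] (X : Ω → S) :
    Hent μ X = 0 := by
  classical
  unfold Hent
  rw [neg_eq_zero]
  refine Finset.sum_eq_zero fun s _ => ?_
  have : probOf μ X s = 1 := by
    rw [probOf_ite]
    rw [← hμ1]
    refine Finset.sum_congr rfl fun ω _ => ?_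
    rw [if_pos (Subsingleton.elim _ _)]
  rw [this]; simp

end Ent

section Key
variable {Ω : Type} [Fintype Ω] {μ : Ω → ℝ} (hμ0 : ∀ ω, 0 ≤ μ ω) (hμ1 : (∑ ω, μ ω) = 1)

include hμ0 hμ1 in
/-- Conditioning on more variables reduces conditional entropy (submodularity). -/
lemma Hcond_pair_le {A B Γ : Type} [Fintype A] [Fintype B] [Fintype Γ]
    (X : Ω → A) (Y : Ω → B) (C : Ω → Γ) :
    Hcond μ X (fun ω => (Y ω, C ω)) ≤ Hcond μ X C := by
  classical
  set W : Ω → A × B × Γ := fun ω => (X ω, Y ω, C ω) with hW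
  set r : A × B × Γ → ℝ := probOf μ W with hr
  set pC : Γ → ℝ := probOf μ C with hpC
  set pXC : A × Γ → ℝ := probOf μ (fun ω => (X ω, C ω)) with hpXC
  set pYC : B × Γ → ℝ := probOf μ (fun ω => (Y ω, C ω)) with hpYC
  have hC : Hent μ C = - ∑ s : A × B × Γ, r s * Real.logb 2 (pC s.2.2) := by
    unfold Hent
    rw [neg_inj]
    exact sum_comp_weight μ W (fun s => s.2.2) (fun t => Real.logb 2 (pC t))
  have hYCm : Hent μ (fun ω => (Y ω, C ω)) = - ∑ s : A × B × Γ, r s * Real.logb 2 (pYC s.2) := by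
    unfold Hent
    rw [neg_inj]
    exact sum_comp_weight μ W (fun s => s.2) (fun t => Real.logb 2 (pYC t))
  have hXCm : Hent μ (fun ω => (X ω, C ω)) = - ∑ s : A × B × Γ, r s * Real.logb 2 (pXC (s.1, s.2.2)) := by
    unfold Hent
    rw [neg_inj]
    exact sum_comp_weight μ W (fun s => (s.1, s.2.2)) (fun t => Real.logb 2 (pXC t))
  have hWent : Hent μ (fun ω => (X ω, (Y ω, C ω))) = - ∑ s : A × B × Γ, r s * Real.logb 2 (r s) := rfl
  -- nonnegativity of the marginals
  have hr0 : ∀ s, 0 ≤ r s := probOf_nonneg μ hμ0 W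
  have hpC0 : ∀ c, 0 ≤ pC c := probOf_nonneg μ hμ0 C
  have hpXC0 : ∀ p, 0 ≤ pXC p := probOf_nonneg μ hμ0 _
  have hpYC0 : ∀ p, 0 ≤ pYC p := probOf_nonneg μ hμ0 _
  -- joint ≤ marginal
  have hrC : ∀ s : A × B × Γ, r s ≤ pC s.2.2 := fun s =>
    probOf_le_comp μ hμ0 W (fun s => s.2.2) s
  have hrXC : ∀ s : A × B × Γ, r s ≤ pXC (s.1, s.2.2) := fun s =>
    probOf_le_comp μ hμ0 W (fun s => (s.1, s.2.2)) s
  have hrYC : ∀ s : A × B × Γ, r s ≤ pYC s.2 := fun s =>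
    probOf_le_comp μ hμ0 W (fun s => s.2) s
  -- marginal sums
  have hmargX : ∀ c : Γ, ∑ a : A, pXC (a, c) = pC c := by
    intro c
    have h := probOf_comp μ (fun ω => (X ω, C ω)) Prod.snd c
    have h2 : probOf μ (fun ω => Prod.snd ((X ω, C ω))) c = pC c := rfl
    rw [h2] at h
    rw [h, Fintype.sum_prod_type]
    refine Finset.sum_congr rfl fun a _ => ?_
    simp [hpXC]
  have hmargY : ∀ c : Γ, ∑ b : B, pYC (b, c) = pC c := by
    intro c
    have h := probOf_comp μ (fun ω => (Y ω, C ω)) Prod.snd c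
    have h2 : probOf μ (fun ω => Prod.snd ((Y ω, C ω))) c = pC c := rfl
    rw [h2] at h
    rw [h, Fintype.sum_prod_type]
    refine Finset.sum_congr rfl fun b _ => ?_
    simp [hpYC]
  have hsumr : ∑ s : A × B × Γ, r s = 1 := sum_probOf μ hμ1 W
  -- the termwise bound
  set E : A × B × Γ → ℝ := fun s => if 0 < r s then pXC (s.1, s.2.2) * pYC s.2 / pC s.2.2 else 0 with hE
  have hlog2 : (0:ℝ) < Real.log 2 := Real.log_pos one_lt_two
  have hterm : ∀ s : A × B × Γ, (r s - E s) / Real.log 2 ≤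
      r s * (Real.logb 2 (r s) + Real.logb 2 (pC s.2.2)
        - Real.logb 2 (pXC (s.1, s.2.2)) - Real.logb 2 (pYC s.2)) := by
    intro s
    by_cases hpos : 0 < r s
    · have hC' : 0 < pC s.2.2 := lt_of_lt_of_le hpos (hrC s)
      have hXC' : 0 < pXC (s.1, s.2.2) := lt_of_lt_of_le hpos (hrXC s)
      have hYC' : 0 < pYC s.2 := lt_of_lt_of_le hpos (hrYC s)
      have hEs : E s = pXC (s.1, s.2.2) * pYC s.2 / pC s.2.2 := if_pos hpos
      set t : ℝ := r s * pC s.2.2 / (pXC (s.1, s.2.2) * pYC s.2) with ht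
      have htpos : 0 < t := by positivity
      have hlogb : Real.logb 2 (r s) + Real.logb 2 (pC s.2.2)
          - Real.logb 2 (pXC (s.1, s.2.2)) - Real.logb 2 (pYC s.2) = Real.logb 2 t := by
        rw [ht, Real.logb_div (by positivity) (by positivity), Real.logb_mul (ne_of_gt hpos) (ne_of_gt hC'),
          Real.logb_mul (ne_of_gt hXC') (ne_of_gt hYC')]
        ring
      rw [hlogb, hEs]
      have hlb : 1 - t⁻¹ ≤ Real.log t := Real.one_sub_inv_le_log_of_pos htpos
      have hinv : r s * t⁻¹ = pXC (s.1, s.2.2) * pYC s.2 / pC s.2.2 := by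
        rw [ht]
        field_simp
      have : r s * (1 - t⁻¹) ≤ r s * Real.log t :=
        mul_le_mul_of_nonneg_left hlb (le_of_lt hpos)
      have h4 : r s - pXC (s.1, s.2.2) * pYC s.2 / pC s.2.2 = r s * (1 - t⁻¹) := by
        rw [mul_sub, mul_one, hinv]
      rw [h4, Real.logb, div_le_iff₀ hlog2]
      have h5 : r s * (Real.log t / Real.log 2) * Real.log 2 = r s * Real.log t := by
        field_simp
      rw [h5]; exact this
    · have hz : r s = 0 := le_antisymm (not_lt.mp hpos) (hr0 s)
      rw [hz, hE]
      simp [hpos]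
  have hEle : ∑ s : A × B × Γ, E s ≤ 1 := by
    have step1 : ∑ s : A × B × Γ, E s ≤
        ∑ s : A × B × Γ, (if 0 < pC s.2.2 then pXC (s.1, s.2.2) * pYC s.2 / pC s.2.2 else 0) := by
      refine Finset.sum_le_sum fun s _ => ?_
      rw [hE]
      by_cases hpos : 0 < r s
      · have hC' : 0 < pC s.2.2 := lt_of_lt_of_le hpos (hrC s)
        simp [hpos, hC']
      · simp only [hpos, if_false]
        split
        · exact div_nonneg (mul_nonneg (hpXC0 _) (hpYC0 _)) (hpC0 _)
        · exact le_rfl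
    have step2 : ∑ s : A × B × Γ, (if 0 < pC s.2.2 then pXC (s.1, s.2.2) * pYC s.2 / pC s.2.2 else 0)
        = ∑ c : Γ, (if 0 < pC c then (∑ a : A, pXC (a, c)) * (∑ b : B, pYC (b, c)) / pC c else 0) := by
      have hpush : ∀ c : Γ, (if 0 < pC c then (∑ a : A, pXC (a, c)) * (∑ b : B, pYC (b, c)) / pC c else 0)
          = ∑ a : A, ∑ b : B, (if 0 < pC c then pXC (a, c) * pYC (b, c) / pC c else 0) := by
        intro c
        split
        · rw [Finset.sum_mul_sum, Finset.sum_div]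
          refine Finset.sum_congr rfl fun a _ => ?_
          rw [Finset.sum_div]
        · simp
      simp_rw [hpush]
      rw [Fintype.sum_prod_type]
      simp_rw [Fintype.sum_prod_type]
      calc ∑ a : A, ∑ b : B, ∑ c : Γ, (if 0 < pC c then pXC (a, c) * pYC (b, c) / pC c else 0)
          = ∑ a : A, ∑ c : Γ, ∑ b : B, (if 0 < pC c then pXC (a, c) * pYC (b, c) / pC c else 0) :=
            Finset.sum_congr rfl fun a _ => Finset.sum_comm
        _ = ∑ c : Γ, ∑ a : A, ∑ b : B, (if 0 < pC c then pXC (a, c) * pYC (b, c) / pC c else 0) :=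
            Finset.sum_comm
    have step3 : ∑ c : Γ, (if 0 < pC c then (∑ a : A, pXC (a, c)) * (∑ b : B, pYC (b, c)) / pC c else 0)
        ≤ ∑ c : Γ, pC c := by
      refine Finset.sum_le_sum fun c _ => ?_
      by_cases hc : 0 < pC c
      · rw [if_pos hc, hmargX, hmargY]
        rw [div_le_iff₀ hc]
      · rw [if_neg hc]; exact hpC0 c
    have step4 : ∑ c : Γ, pC c = 1 := sum_probOf μ hμ1 C
    linarith
  have main : 0 ≤ ∑ s : A × B × Γ, r s * (Real.logb 2 (r s) + Real.logb 2 (pC s.2.2)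
      - Real.logb 2 (pXC (s.1, s.2.2)) - Real.logb 2 (pYC s.2)) := by
    have h1 : ∑ s : A × B × Γ, (r s - E s) / Real.log 2 ≤ _ := Finset.sum_le_sum fun s _ => hterm s
    have h2 : ∑ s : A × B × Γ, (r s - E s) / Real.log 2
        = (∑ s : A × B × Γ, r s - ∑ s : A × B × Γ, E s) / Real.log 2 := by
      rw [← Finset.sum_div, Finset.sum_sub_distrib]
    have h3 : 0 ≤ (∑ s : A × B × Γ, r s - ∑ s : A × B × Γ, E s) / Real.log 2 := by
      apply div_nonneg _ (le_of_lt hlog2)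
      rw [hsumr]; linarith
    calc (0:ℝ) ≤ _ := h3
      _ = _ := h2.symm
      _ ≤ _ := h1
  have expand : ∑ s : A × B × Γ, r s * (Real.logb 2 (r s) + Real.logb 2 (pC s.2.2)
      - Real.logb 2 (pXC (s.1, s.2.2)) - Real.logb 2 (pYC s.2))
      = (∑ s : A × B × Γ, r s * Real.logb 2 (r s)) + (∑ s : A × B × Γ, r s * Real.logb 2 (pC s.2.2))
      - (∑ s : A × B × Γ, r s * Real.logb 2 (pXC (s.1, s.2.2)))
      - (∑ s : A × B × Γ, r s * Real.logb 2 (pYC s.2)) := by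
    simp only [mul_add, mul_sub]
    simp only [Finset.sum_sub_distrib, Finset.sum_add_distrib]
  rw [expand] at main
  unfold Hcond
  rw [hC, hYCm, hXCm, hWent]
  linarith
end Key

section Util
variable {Ω : Type} [Fintype Ω] {μ : Ω → ℝ} (hμ0 : ∀ ω, 0 ≤ μ ω) (hμ1 : (∑ ω, μ ω) = 1)

include hμ0 in
lemma Hent_fst_le {A B : Type} [Fintype A] [Fintype B] (X : Ω → A) (Y : Ω → B) :
    Hent μ X ≤ Hent μ (fun ω => (X ω, Y ω)) :=
  Hent_comp_le hμ0 (fun ω => (X ω, Y ω)) Prod.fst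

include hμ0 in
lemma Hent_snd_le {A B : Type} [Fintype A] [Fintype B] (X : Ω → A) (Y : Ω → B) :
    Hent μ Y ≤ Hent μ (fun ω => (X ω, Y ω)) :=
  Hent_comp_le hμ0 (fun ω => (X ω, Y ω)) Prod.snd

include hμ0 in
lemma Hcond_nonneg {A B : Type} [Fintype A] [Fintype B] (X : Ω → A) (Y : Ω → B) :
    0 ≤ Hcond μ X Y := sub_nonneg.mpr (Hent_snd_le hμ0 X Y)

lemma Hent_chain {A B : Type} [Fintype A] [Fintype B] (X : Ω → A) (Y : Ω → B) :
    Hent μ (fun ω => (X ω, Y ω)) = Hent μ Y + Hcond μ X Y := by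
  unfold Hcond; ring

include hμ0 in
lemma Hcond_congr_right {A B1 B2 : Type} [Fintype A] [Fintype B1] [Fintype B2]
    (X : Ω → A) {B : Ω → B1} {B' : Ω → B2} (f : B1 → B2) (g : B2 → B1)
    (hf : ∀ ω, f (B ω) = B' ω) (hg : ∀ ω, g (B' ω) = B ω) :
    Hcond μ X B = Hcond μ X B' := by
  unfold Hcond
  rw [Hent_congr_det hμ0 (X := fun ω => (X ω, B ω)) (Y := fun ω => (X ω, B' ω))
    (Prod.map id f) (Prod.map id g)
    (fun ω => by simp [Prod.map, hf ω]) (fun ω => by simp [Prod.map, hg ω]),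
    Hent_congr_det hμ0 (X := B) (Y := B') f g hf hg]

include hμ0 hμ1 in
/-- conditioning on a finer variable gives smaller conditional entropy -/
lemma Hcond_comp_le_right {A B1 B2 : Type} [Fintype A] [Fintype B1] [Fintype B2]
    (X : Ω → A) (B : Ω → B1) (g : B1 → B2) :
    Hcond μ X B ≤ Hcond μ X (fun ω => g (B ω)) := by
  have h1 : Hcond μ X B = Hcond μ X (fun ω => (B ω, g (B ω))) :=
    Hcond_congr_right hμ0 X (fun b => (b, g b)) Prod.fst (fun ω => rfl) (fun ω => rfl)
  rw [h1]
  exact Hcond_pair_le hμ0 hμ1 X B (fun ω => g (B ω))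

include hμ0 in
/-- If `Y` is (entropy-wise) determined by `X`, knowing `X` bounds entropy. -/
lemma Hent_le_of_det {A B : Type} [Fintype A] [Fintype B] (X : Ω → A) (Y : Ω → B)
    (h0 : Hcond μ Y X = 0) : Hent μ Y ≤ Hent μ X := by
  have h1 : Hent μ Y ≤ Hent μ (fun ω => (Y ω, X ω)) := Hent_fst_le hμ0 Y X
  have h2 : Hent μ (fun ω => (Y ω, X ω)) = Hent μ X + Hcond μ Y X := Hent_chain Y X
  rw [h2, h0, add_zero] at h1
  exact h1

end Util

section Chain
variable {Ω : Type} [Fintype Ω] {μ : Ω → ℝ} (hμ0 : ∀ ω, 0 ≤ μ ω) (hμ1 : (∑ ω, μ ω) = 1)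

include hμ0 hμ1 in
/-- Chain rule bound: the joint entropy of `(G, V₀, …, V_{m-1})` is at most
`H(G)` plus the sum of conditional entropies of each `Vᵢ` given `G` and the prefix. -/
lemma Hent_chain_tuple {A T : Type} [Fintype A] [Fintype T] :
    ∀ (m : ℕ) (V : Fin m → Ω → T) (G : Ω → A) (r : Fin m → ℝ),
    (∀ i : Fin m, Hcond μ (V i)
        (fun ω => (G ω, fun j : Fin i.1 => V ⟨j.1, lt_trans j.2 i.2⟩ ω)) ≤ r i) →
    Hent μ (fun ω => (G ω, fun i => V i ω)) ≤ Hent μ G + ∑ i, r i := by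
  intro m
  induction m with
  | zero =>
    intro V G r _
    have he : Hent μ (fun ω => (G ω, fun i : Fin 0 => V i ω)) = Hent μ G :=
      Hent_congr_det hμ0 Prod.fst (fun a => (a, fun i : Fin 0 => i.elim0))
        (fun ω => rfl) (fun ω => by
          refine Prod.ext rfl ?_
          exact funext fun i => i.elim0)
    rw [he]
    simp
  | succ m ih =>
    intro V G r hr
    have hm : m < m + 1 := Nat.lt_succ_self m
    -- reshape the (m+1)-tuple as (last, (G, m-tuple))
    have key1 : Hent μ (fun ω => (G ω, fun i : Fin (m+1) => V i ω))
        = Hent μ (fun ω => (V ⟨m, hm⟩ ω,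
            (G ω, fun i : Fin m => V ⟨i.1, lt_trans i.2 hm⟩ ω))) := by
      refine Hent_congr_det hμ0
        (fun p => (p.2 ⟨m, hm⟩, (p.1, fun i : Fin m => p.2 ⟨i.1, lt_trans i.2 hm⟩)))
        (fun q => (q.2.1, fun i : Fin (m+1) => if h : i.1 < m then q.2.2 ⟨i.1, h⟩ else q.1))
        (fun ω => rfl) (fun ω => ?_)
      refine Prod.ext rfl ?_
      refine funext fun i => ?_
      by_cases h : i.1 < m
      · simp only [dif_pos h]
      · simp only [dif_neg h]
        have hi : i = ⟨m, hm⟩ := by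
          apply Fin.ext
          simp only [Fin.val_mk]
          have := i.2
          omega
        rw [hi]
    rw [key1, Hent_chain]
    have hlast : Hcond μ (V ⟨m, hm⟩)
        (fun ω => (G ω, fun i : Fin m => V ⟨i.1, lt_trans i.2 hm⟩ ω)) ≤ r ⟨m, hm⟩ :=
      hr ⟨m, hm⟩
    have hind := ih (fun i : Fin m => V ⟨i.1, lt_trans i.2 hm⟩) G
      (fun i : Fin m => r ⟨i.1, lt_trans i.2 hm⟩)
      (fun i => hr ⟨i.1, lt_trans i.2 hm⟩)
    have hsum : ∑ i : Fin (m+1), r i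
        = ∑ i : Fin m, r ⟨i.1, lt_trans i.2 hm⟩ + r ⟨m, hm⟩ := by
      rw [Fin.sum_univ_castSucc]
      rfl
    rw [hsum]
    linarith
end Chain

section App

/-- levels `< m` of user `k` -/
def lowFam {Ω T : Type} {K : ℕ} (ZM : Fin K → Fin K → Ω → T) (k : Fin K) (m : ℕ) :
    Ω → ({l : Fin K // l.1 < m} → T) := fun ω l => ZM l.1 k ω

/-- levels `< m` of all users -/
def allFam {Ω T : Type} {K : ℕ} (ZM : Fin K → Fin K → Ω → T) (m : ℕ) :
    Ω → ({l : Fin K // l.1 < m} × Fin K → T) := fun ω p => ZM p.1.1 p.2 ω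

/-- level `n` of all users -/
def rowFam {Ω T : Type} {K : ℕ} (ZM : Fin K → Fin K → Ω → T) (n : Fin K) :
    Ω → (Fin K → T) := fun ω k => ZM n k ω

/-- all levels of user `k` -/
def colFam {Ω T : Type} {K : ℕ} (ZM : Fin K → Fin K → Ω → T) (k : Fin K) :
    Ω → (Fin K → T) := fun ω n => ZM n k ω

/-- the conditional entropy `H(Z_k^n | Z_k^1, …, Z_k^{n-1})` -/
noncomputable def dEnt {Ω T : Type} [Fintype Ω] [Fintype T] {K : ℕ} (μ : Ω → ℝ)
    (ZM : Fin K → Fin K → Ω → T) (k n : Fin K) : ℝ :=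
  Hcond μ (ZM n k) (lowFam ZM k n.1)

/-- cyclic window map -/
def wmap {K : ℕ} (n : Fin K) (j : Fin K) : Fin (n.1 + 1) → Fin K :=
  fun i => j + ⟨i.1, Nat.lt_of_lt_of_le i.2 n.2⟩

variable {K : ℕ} (hK : 1 ≤ K) {L : ℝ}
  {Ω : Type} [Fintype Ω] {μ : Ω → ℝ}
  (hμ0 : ∀ ω, 0 ≤ μ ω) (hμ1 : (∑ ω, μ ω) = 1)
  {T : Type} [Fintype T] {ZM : Fin K → Fin K → Ω → T}

section MDS
variable (hMDS : ∀ (n : Fin K) (U : Finset (Fin K)),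
      Hent μ (fun ω (u : ↥U) => ZM n u.1 ω) = (min U.card (n.1 + 1) : ℕ) * L)

include hμ0 hMDS in
lemma rowEnt (n : Fin K) : Hent μ (rowFam ZM n) = ((n.1 + 1 : ℕ) : ℝ) * L := by
  have h := hMDS n Finset.univ
  have hrec : Hent μ (rowFam ZM n)
      = Hent μ (fun ω (u : ↥(Finset.univ : Finset (Fin K))) => ZM n u.1 ω) :=
    Hent_congr_det hμ0 (fun a u => a u.1) (fun a k => a ⟨k, Finset.mem_univ k⟩)
      (fun ω => rfl) (fun ω => rfl)
  rw [hrec, h]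
  congr 2
  rw [Finset.card_univ, Fintype.card_fin]
  exact min_eq_right n.2

include hμ0 hMDS in
lemma tupleEnt (n : Fin K) (w : Fin (n.1 + 1) → Fin K) (hw : Function.Injective w) :
    Hent μ (fun ω (i : Fin (n.1 + 1)) => ZM n (w i) ω) = ((n.1 + 1 : ℕ) : ℝ) * L := by
  classical
  haveI : Nonempty (Fin (n.1 + 1)) := ⟨⟨0, Nat.succ_pos _⟩⟩
  set U : Finset (Fin K) := Finset.image w Finset.univ with hU
  have hcard : U.card = n.1 + 1 := by
    rw [hU, Finset.card_image_of_injective _ hw, Finset.card_univ, Fintype.card_fin]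
  have h := hMDS n U
  have hrec : Hent μ (fun ω (i : Fin (n.1 + 1)) => ZM n (w i) ω)
      = Hent μ (fun ω (u : ↥U) => ZM n u.1 ω) := by
    refine Hent_congr_det hμ0
      (fun a u => a (Function.invFun w u.1))
      (fun b i => b ⟨w i, Finset.mem_image_of_mem w (Finset.mem_univ i)⟩)
      (fun ω => ?_) (fun ω => rfl)
    funext u
    have hmem : ∃ i, w i = u.1 := by
      obtain ⟨i, _, hi⟩ := Finset.mem_image.mp u.2
      exact ⟨i, hi⟩
    have : w (Function.invFun w u.1) = u.1 := Function.invFun_eq hmem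
    show ZM n (w (Function.invFun w u.1)) ω = ZM n u.1 ω
    rw [this]
  rw [hrec, h, hcard]
  congr 2
  exact min_self _

end MDS
end App

section App2
variable {K : ℕ} {L : ℝ}
  {Ω : Type} [Fintype Ω] {μ : Ω → ℝ}
  (hμ0 : ∀ ω, 0 ≤ μ ω) (hμ1 : (∑ ω, μ ω) = 1)
  {T : Type} [Fintype T] {ZM : Fin K → Fin K → Ω → T}

include hμ1 in
lemma lowFam_zero (k : Fin K) : Hent μ (lowFam ZM k 0) = 0 := by
  haveI : Subsingleton ({l : Fin K // l.1 < 0} → T) :=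
    ⟨fun a b => funext fun l => absurd l.2 (Nat.not_lt_zero _)⟩
  exact Hent_subsingleton hμ1 _

include hμ0 in
lemma lowFam_succ (k : Fin K) (m : ℕ) (h : m < K) :
    Hent μ (lowFam ZM k (m + 1)) = Hent μ (lowFam ZM k m) + dEnt μ ZM k ⟨m, h⟩ := by
  have hpair : Hent μ (lowFam ZM k (m + 1))
      = Hent μ (fun ω => (ZM ⟨m, h⟩ k ω, lowFam ZM k m ω)) := by
    refine Hent_congr_det hμ0
      (fun a => (a ⟨⟨m, h⟩, Nat.lt_succ_self m⟩, fun l => a ⟨l.1, Nat.lt_succ_of_lt l.2⟩))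
      (fun p l => if hl : l.1.1 < m then p.2 ⟨l.1, hl⟩ else p.1)
      (fun ω => rfl) (fun ω => ?_)
    funext l
    by_cases hl : l.1.1 < m
    · simp only [dif_pos hl]
      rfl
    · simp only [dif_neg hl]
      have hl1 : l.1 = ⟨m, h⟩ := by
        apply Fin.ext
        simp only [Fin.val_mk]
        have := l.2
        omega
      show ZM ⟨m, h⟩ k ω = lowFam ZM k (m+1) ω l
      show ZM ⟨m, h⟩ k ω = ZM l.1 k ω
      rw [hl1]
  rw [hpair, Hent_chain]
  rfl

include hμ0 hμ1 in
lemma colFam_eq_sum (k : Fin K) :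
    Hent μ (colFam ZM k) = ∑ n : Fin K, dEnt μ ZM k n := by
  classical
  have hrange : ∀ m : ℕ, m ≤ K →
      Hent μ (lowFam ZM k m)
        = ∑ i ∈ Finset.range m, (if h : i < K then dEnt μ ZM k ⟨i, h⟩ else 0) := by
    intro m
    induction m with
    | zero => intro _; simpa using lowFam_zero hμ1 k
    | succ m ih =>
      intro hm
      have hmK : m < K := hm
      rw [Finset.sum_range_succ, ← ih (le_of_lt hmK), dif_pos hmK]
      exact lowFam_succ hμ0 k m hmK
  have hcol : Hent μ (colFam ZM k) = Hent μ (lowFam ZM k K) :=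
    Hent_congr_det hμ0 (fun a l => a l.1) (fun a n => a ⟨n, n.2⟩)
      (fun ω => rfl) (fun ω => rfl)
  rw [hcol, hrange K le_rfl, ← Fin.sum_univ_eq_sum_range (fun i => if h : i < K then dEnt μ ZM k ⟨i, h⟩ else 0) K]
  refine Finset.sum_congr rfl fun n _ => ?_
  rw [dif_pos n.2]

include hμ1 in
lemma allFam_zero : Hent μ (allFam ZM 0) = 0 := by
  haveI : Subsingleton ({l : Fin K // l.1 < 0} × Fin K → T) :=
    ⟨fun a b => funext fun p => absurd p.1.2 (Nat.not_lt_zero _)⟩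
  exact Hent_subsingleton hμ1 _

section MDS2
variable (hMDS : ∀ (n : Fin K) (U : Finset (Fin K)),
      Hent μ (fun ω (u : ↥U) => ZM n u.1 ω) = (min U.card (n.1 + 1) : ℕ) * L)

include hμ0 hMDS in
lemma allFam_ge (m : ℕ) (h1 : 1 ≤ m) (h2 : m ≤ K) :
    (m : ℝ) * L ≤ Hent μ (allFam ZM m) := by
  have hm1 : m - 1 < K := by omega
  set n : Fin K := ⟨m - 1, hm1⟩ with hn
  have hrow : Hent μ (rowFam ZM n) = ((n.1 + 1 : ℕ) : ℝ) * L := rowEnt hμ0 hMDS n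
  have hcast : ((n.1 + 1 : ℕ) : ℝ) = (m : ℝ) := by
    have hv : n.1 = m - 1 := rfl
    rw [hv]
    norm_cast
    omega
  have hcomp := Hent_comp_le hμ0 (μ := μ) (allFam ZM m)
    (fun a (k : Fin K) => a (⟨n, by rw [hn]; simp only [Fin.val_mk]; omega⟩, k))
  have hcongr : Hent μ (fun ω => (fun (k : Fin K) =>
      allFam ZM m ω (⟨n, by rw [hn]; simp only [Fin.val_mk]; omega⟩, k))) = Hent μ (rowFam ZM n) :=
    Hent_congr (fun ω => rfl)
  rw [hcongr, hrow, hcast] at hcomp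
  exact hcomp

end MDS2
end App2

section App3
variable {K : ℕ} {L : ℝ}
  {Ω : Type} [Fintype Ω] {μ : Ω → ℝ}
  (hμ0 : ∀ ω, 0 ≤ μ ω) (hμ1 : (∑ ω, μ ω) = 1)
  {T : Type} [Fintype T] {ZM : Fin K → Fin K → Ω → T}
  (hMDS : ∀ (n : Fin K) (U : Finset (Fin K)),
      Hent μ (fun ω (u : ↥U) => ZM n u.1 ω) = (min U.card (n.1 + 1) : ℕ) * L)

include hμ0 hμ1 hMDS in
lemma windowBound (hK : 1 ≤ K) (n : Fin K) (j : Fin K) :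
    Hent μ (allFam ZM (n.1 + 1)) - Hent μ (allFam ZM n.1)
      ≤ ∑ i : Fin (n.1 + 1), dEnt μ ZM (wmap n j i) n := by
  classical
  haveI : NeZero K := ⟨by omega⟩
  set w : Fin (n.1 + 1) → Fin K := wmap n j with hwdef
  have hwinj : Function.Injective w := by
    intro a b hab
    have h2 : (⟨a.1, Nat.lt_of_lt_of_le a.2 n.2⟩ : Fin K) = ⟨b.1, Nat.lt_of_lt_of_le b.2 n.2⟩ :=
      add_right_injective j hab
    have h3 := congrArg (fun x : Fin K => x.1) h2
    exact Fin.ext h3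
  set G : Ω → ({l : Fin K // l.1 < n.1} × Fin K → T) := allFam ZM n.1 with hG
  set tupleV : Ω → (Fin (n.1 + 1) → T) := fun ω i => ZM n (w i) ω with htv
  -- chain rule bound
  have hchain : Hent μ (fun ω => (G ω, fun i => ZM n (w i) ω))
      ≤ Hent μ G + ∑ i : Fin (n.1 + 1), dEnt μ ZM (w i) n := by
    refine Hent_chain_tuple hμ0 hμ1 (n.1 + 1) (fun i => ZM n (w i)) G
      (fun i => dEnt μ ZM (w i) n) (fun i => ?_)
    have hmono := Hcond_comp_le_right hμ0 hμ1 (ZM n (w i))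
      (fun ω => (G ω, fun j' : Fin i.1 => ZM n (w ⟨j'.1, lt_trans j'.2 i.2⟩) ω))
      (fun p => (fun l : {l : Fin K // l.1 < n.1} => p.1 (l, w i)))
    exact hmono
  -- the pair (G, tupleV) has entropy at least that of allFam (n.1+1)
  have hup : Hent μ (allFam ZM (n.1 + 1)) ≤ Hent μ (fun ω => (G ω, fun i => ZM n (w i) ω)) := by
    have hbig : Hent μ (allFam ZM (n.1 + 1))
        ≤ Hent μ (fun ω => (rowFam ZM n ω, (G ω, tupleV ω))) := by
      have hcomp := Hent_comp_le hμ0 (μ := μ) (fun ω => (rowFam ZM n ω, (G ω, tupleV ω)))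
        (fun q (p : {l : Fin K // l.1 < n.1 + 1} × Fin K) =>
          if h : p.1.1.1 < n.1 then q.2.1 (⟨p.1.1, h⟩, p.2) else q.1 p.2)
      have hcongr : Hent μ (fun ω => (fun (p : {l : Fin K // l.1 < n.1 + 1} × Fin K) =>
          if h : p.1.1.1 < n.1 then G ω (⟨p.1.1, h⟩, p.2) else rowFam ZM n ω p.2))
          = Hent μ (allFam ZM (n.1 + 1)) := by
        refine Hent_congr (fun ω => ?_)
        funext p
        by_cases h : p.1.1.1 < n.1
        · simp only [dif_pos h]
          rfl
        · simp only [dif_neg h]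
          have hp : p.1.1 = n := by
            apply Fin.ext
            have := p.1.2
            omega
          show ZM n p.2 ω = ZM p.1.1 p.2 ω
          rw [hp]
      rw [hcongr] at hcomp
      exact hcomp
    have hsplit : Hent μ (fun ω => (rowFam ZM n ω, (G ω, tupleV ω)))
        = Hent μ (fun ω => (G ω, tupleV ω)) + Hcond μ (rowFam ZM n) (fun ω => (G ω, tupleV ω)) :=
      Hent_chain _ _
    have hred : Hcond μ (rowFam ZM n) (fun ω => (G ω, tupleV ω))
        ≤ Hcond μ (rowFam ZM n) tupleV :=
      Hcond_pair_le hμ0 hμ1 (rowFam ZM n) G tupleV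
    have hzero : Hcond μ (rowFam ZM n) tupleV = 0 := by
      unfold Hcond
      have hpair : Hent μ (fun ω => (rowFam ZM n ω, tupleV ω)) = Hent μ (rowFam ZM n) :=
        Hent_congr_det hμ0 Prod.fst (fun row => (row, fun i => row (w i)))
          (fun ω => rfl) (fun ω => rfl)
      rw [hpair, rowEnt hμ0 hMDS n, tupleEnt hμ0 hMDS n w hwinj]
      ring
    have : Hent μ (fun ω => (G ω, tupleV ω)) = Hent μ (fun ω => (G ω, fun i => ZM n (w i) ω)) :=
      Hent_congr (fun ω => rfl)
    rw [this] at hsplit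
    linarith
  have hQn : Hent μ G = Hent μ (allFam ZM n.1) := rfl
  linarith
end App3

section App4
variable {K : ℕ} {L : ℝ}
  {Ω : Type} [Fintype Ω] {μ : Ω → ℝ}
  (hμ0 : ∀ ω, 0 ≤ μ ω) (hμ1 : (∑ ω, μ ω) = 1)
  {T : Type} [Fintype T] {ZM : Fin K → Fin K → Ω → T}
  (hMDS : ∀ (n : Fin K) (U : Finset (Fin K)),
      Hent μ (fun ω (u : ↥U) => ZM n u.1 ω) = (min U.card (n.1 + 1) : ℕ) * L)

include hμ0 hμ1 hMDS in
lemma levelBound (hK : 1 ≤ K) (n : Fin K) :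
    (K : ℝ) * (Hent μ (allFam ZM (n.1 + 1)) - Hent μ (allFam ZM n.1))
      ≤ ((n.1 + 1 : ℕ) : ℝ) * ∑ k : Fin K, dEnt μ ZM k n := by
  classical
  haveI : NeZero K := ⟨by omega⟩
  have hsum : ∑ _j : Fin K, (Hent μ (allFam ZM (n.1 + 1)) - Hent μ (allFam ZM n.1))
      ≤ ∑ j : Fin K, ∑ i : Fin (n.1 + 1), dEnt μ ZM (wmap n j i) n :=
    Finset.sum_le_sum (fun j _ => windowBound hμ0 hμ1 hMDS hK n j)
  rw [Finset.sum_const, Finset.card_univ, Fintype.card_fin, nsmul_eq_mul] at hsum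
  have hswap : ∑ j : Fin K, ∑ i : Fin (n.1 + 1), dEnt μ ZM (wmap n j i) n
      = ((n.1 + 1 : ℕ) : ℝ) * ∑ k : Fin K, dEnt μ ZM k n := by
    rw [Finset.sum_comm]
    have hinner : ∀ i : Fin (n.1 + 1),
        ∑ j : Fin K, dEnt μ ZM (wmap n j i) n = ∑ k : Fin K, dEnt μ ZM k n := by
      intro i
      exact Fintype.sum_equiv (Equiv.addRight (⟨i.1, Nat.lt_of_lt_of_le i.2 n.2⟩ : Fin K))
        (fun j => dEnt μ ZM (wmap n j i) n) (fun k => dEnt μ ZM k n) (fun j => rfl)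
    rw [Finset.sum_congr rfl (fun i _ => hinner i), Finset.sum_const, Finset.card_univ,
      Fintype.card_fin, nsmul_eq_mul]
  rw [hswap] at hsum
  exact hsum
end App4

section Abel

lemma abel_sum (L : ℝ) (Q : ℕ → ℝ) (hQ0 : Q 0 = 0) (KK : ℕ)
    (hQ : ∀ m, 1 ≤ m → m ≤ KK → (m : ℝ) * L ≤ Q m) :
    ∀ N, 1 ≤ N → N ≤ KK →
      L * (∑ i ∈ Finset.range N, 1 / ((i : ℝ) + 1)) + (Q N - N * L) / N
        ≤ ∑ n ∈ Finset.range N, (Q (n + 1) - Q n) / ((n : ℝ) + 1) := by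
  intro N hN
  induction N, hN using Nat.le_induction with
  | base =>
    intro _
    simp only [Finset.sum_range_one, Nat.cast_zero, Nat.cast_one, hQ0]
    norm_num
  | succ N hN ih =>
    intro hNK
    have hNK' : N ≤ KK := by omega
    have ih' := ih hNK'
    have hN0 : (0:ℝ) < N := by exact_mod_cast hN
    have hN1 : (0:ℝ) < (N:ℝ) + 1 := by linarith
    have hQN : (N : ℝ) * L ≤ Q N := hQ N hN hNK'
    have hx : 0 ≤ Q N - N * L := by linarith
    have key : (Q N - N * L) * (1 / ((N:ℝ) + 1)) ≤ (Q N - N * L) * (1 / (N:ℝ)) :=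
      mul_le_mul_of_nonneg_left (by
        apply one_div_le_one_div_of_le hN0
        linarith) hx
    rw [Finset.sum_range_succ, Finset.sum_range_succ]
    push_cast
    rw [div_eq_mul_one_div (Q (N+1) - (((N:ℝ)+1)) * L), div_eq_mul_one_div (Q N - (N:ℝ) * L),
      div_eq_mul_one_div (Q (N+1) - Q N)] at *
    nlinarith [ih', key]

end Abel

/-- Converse part of Theorem 1 (MDS variable generation):
the per-user randomness rate is at least the harmonic number 1 + 1/2 + ⋯ + 1/K. -/
theorem mds_variable_generation_converse
    (K : ℕ) (hK : 1 ≤ K) (L : ℝ) (hL : 0 < L)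
    (Ω : Type) [Fintype Ω] (μ : Ω → ℝ)
    (hμ0 : ∀ ω, 0 ≤ μ ω) (hμ1 : (∑ ω, μ ω) = 1)
    (S T : Type) [Fintype S] [Fintype T]
    -- `Z k` is the source variable of user `k`; `ZM n k` is the MDS variable `Z_k^n`
    (Z : Fin K → Ω → S) (ZM : Fin K → Fin K → Ω → T)
    -- (i)  H(Z_k^1, …, Z_k^K | Z_k) = 0
    (hdet : ∀ k : Fin K, Hcond μ (fun ω (n : Fin K) => ZM n k ω) (Z k) = 0)
    -- (ii)  H(Z_k^n) = L
    (hsize : ∀ n k : Fin K, Hent μ (ZM n k) = L)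
    -- (iii)  for every n, (Z_1^n, …, Z_K^n) is (K,n)-MDS with symbol size L
    (hMDS : ∀ (n : Fin K) (U : Finset (Fin K)),
      Hent μ (fun ω (u : ↥U) => ZM n u.1 ω) = (min U.card (n.1 + 1) : ℕ) * L) :
    (1 / (K : ℝ)) * ∑ k : Fin K, Hent μ (Z k)
        ≥ (∑ i ∈ Finset.range K, 1 / ((i : ℝ) + 1)) * L ∧
    ∀ LZ : ℝ, (∀ k : Fin K, Hent μ (Z k) ≤ LZ) →
      LZ / L ≥ ∑ i ∈ Finset.range K, 1 / ((i : ℝ) + 1) := by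
  classical
  have hKpos : (0:ℝ) < K := by exact_mod_cast hK
  set HK : ℝ := ∑ i ∈ Finset.range K, 1 / ((i : ℝ) + 1) with hHK
  set Q : ℕ → ℝ := fun m => Hent μ (allFam ZM m) with hQdef
  have hQ0 : Q 0 = 0 := allFam_zero hμ1
  have hQ : ∀ m, 1 ≤ m → m ≤ K → (m : ℝ) * L ≤ Q m :=
    fun m h1 h2 => allFam_ge hμ0 hMDS m h1 h2
  have habel := abel_sum L Q hQ0 K hQ K hK le_rfl
  have hQK : (K : ℝ) * L ≤ Q K := hQ K hK le_rfl
  -- per-level bound, in divided form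
  have hlevel' : ∀ n : Fin K, (K:ℝ) * ((Q (n.1 + 1) - Q n.1) / ((n.1 : ℝ) + 1))
      ≤ ∑ k : Fin K, dEnt μ ZM k n := by
    intro n
    have h := levelBound hμ0 hμ1 hMDS hK n
    have hpos : (0:ℝ) < (n.1 : ℝ) + 1 := by positivity
    rw [mul_div_assoc'] at *
    rw [div_le_iff₀ hpos]
    have hcast : ((n.1 + 1 : ℕ) : ℝ) = (n.1 : ℝ) + 1 := by push_cast; ring
    calc (K:ℝ) * (Q (n.1 + 1) - Q n.1) ≤ ((n.1 + 1 : ℕ) : ℝ) * ∑ k : Fin K, dEnt μ ZM k n := h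
      _ = (∑ k : Fin K, dEnt μ ZM k n) * ((n.1:ℝ) + 1) := by rw [hcast]; ring
  -- total bound
  have htot : (K:ℝ) * ∑ m ∈ Finset.range K, (Q (m + 1) - Q m) / ((m : ℝ) + 1)
      ≤ ∑ k : Fin K, Hent μ (Z k) := by
    have h1 : (K:ℝ) * ∑ m ∈ Finset.range K, (Q (m + 1) - Q m) / ((m : ℝ) + 1)
        = ∑ m ∈ Finset.range K, (K:ℝ) * ((Q (m + 1) - Q m) / ((m : ℝ) + 1)) := by
      rw [Finset.mul_sum]
    have h2 : ∑ m ∈ Finset.range K, (K:ℝ) * ((Q (m + 1) - Q m) / ((m : ℝ) + 1))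
        = ∑ n : Fin K, (K:ℝ) * ((Q (n.1 + 1) - Q n.1) / ((n.1 : ℝ) + 1)) :=
      (Fin.sum_univ_eq_sum_range (fun m => (K:ℝ) * ((Q (m + 1) - Q m) / ((m : ℝ) + 1))) K).symm
    have h3 : ∑ n : Fin K, (K:ℝ) * ((Q (n.1 + 1) - Q n.1) / ((n.1 : ℝ) + 1))
        ≤ ∑ n : Fin K, ∑ k : Fin K, dEnt μ ZM k n :=
      Finset.sum_le_sum (fun n _ => hlevel' n)
    have h4 : ∑ n : Fin K, ∑ k : Fin K, dEnt μ ZM k n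
        = ∑ k : Fin K, ∑ n : Fin K, dEnt μ ZM k n := Finset.sum_comm
    have h5 : ∀ k : Fin K, ∑ n : Fin K, dEnt μ ZM k n ≤ Hent μ (Z k) := by
      intro k
      rw [← colFam_eq_sum hμ0 hμ1 k]
      exact Hent_le_of_det hμ0 (Z k) (colFam ZM k) (hdet k)
    calc (K:ℝ) * ∑ m ∈ Finset.range K, (Q (m + 1) - Q m) / ((m : ℝ) + 1)
        = ∑ n : Fin K, (K:ℝ) * ((Q (n.1 + 1) - Q n.1) / ((n.1 : ℝ) + 1)) := by rw [h1, h2]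
      _ ≤ ∑ n : Fin K, ∑ k : Fin K, dEnt μ ZM k n := h3
      _ = ∑ k : Fin K, ∑ n : Fin K, dEnt μ ZM k n := h4
      _ ≤ ∑ k : Fin K, Hent μ (Z k) := Finset.sum_le_sum (fun k _ => h5 k)
  -- abel gives the harmonic lower bound
  have hharm : L * HK ≤ ∑ m ∈ Finset.range K, (Q (m + 1) - Q m) / ((m : ℝ) + 1) := by
    have hslack : 0 ≤ (Q K - K * L) / K := div_nonneg (by linarith) hKpos.le
    linarith [habel]
  have hfin : (K:ℝ) * (L * HK) ≤ ∑ k : Fin K, Hent μ (Z k) :=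
    le_trans (mul_le_mul_of_nonneg_left hharm hKpos.le) htot
  have hKne : (K:ℝ) ≠ 0 := ne_of_gt hKpos
  constructor
  · rw [ge_iff_le]
    calc HK * L = (1 / (K:ℝ)) * ((K:ℝ) * (L * HK)) := by field_simp
      _ ≤ (1 / (K:ℝ)) * ∑ k : Fin K, Hent μ (Z k) :=
        mul_le_mul_of_nonneg_left hfin (by positivity)
  · intro LZ hLZ
    have hsum : ∑ k : Fin K, Hent μ (Z k) ≤ (K:ℝ) * LZ := by
      calc ∑ k : Fin K, Hent μ (Z k) ≤ ∑ _k : Fin K, LZ :=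
            Finset.sum_le_sum (fun k _ => hLZ k)
        _ = (K:ℝ) * LZ := by rw [Finset.sum_const, Finset.card_univ, Fintype.card_fin, nsmul_eq_mul]
    have hLH : L * HK ≤ LZ := by
      have := le_trans hfin hsum
      exact le_of_mul_le_mul_left this hKpos
    rw [ge_iff_le, le_div_iff₀ hL]
    linarith
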